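/- In a bi-involutive tensor category, the unitary j : 1 → \overline{1} is determined by the remaining data via j = λ_{\overline 1} ∘ (φ_1^{-1} ⊗ id_{\overline 1}) ∘ ν_{\overline{1},1}^{-1} ∘ \overline{λ_{\overline 1}}^{-1} ∘ φ_1. -/

import Mathlib

open CategoryTheory MonoidalCategory

/-- The conjugation data of a bi-involutive tensor category: a (covariant, in the linear
setting antilinear) conjugation functor `conj` together with unitary coherence
isomorphisms `φ : X ≅ conj (conj X)`, `ν : conj X ⊗ conj Y ≅ conj (Y ⊗ X)` and
`j : 𝟙 ≅ conj 𝟙`, satisfying the bi-involutive coherence axioms (with the structural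
associators and unitors inserted where needed). -/
structure BiInvolutive (C : Type*) [Category C] [MonoidalCategory C] where
  conj : C ⥤ C
  φ : ∀ X : C, X ≅ conj.obj (conj.obj X)
  ν : ∀ X Y : C, conj.obj X ⊗ conj.obj Y ≅ conj.obj (Y ⊗ X)
  j : 𝟙_ C ≅ conj.obj (𝟙_ C)
  nu_assoc : ∀ X Y Z : C,
    (𝟙 (conj.obj X) ⊗ₘ (ν Y Z).hom) ≫ (ν X (Z ⊗ Y)).hom ≫ conj.map (α_ Z Y X).hom
      = (α_ (conj.obj X) (conj.obj Y) (conj.obj Z)).inv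
        ≫ ((ν X Y).hom ⊗ₘ 𝟙 (conj.obj Z)) ≫ (ν (Y ⊗ X) Z).hom
  nu_j_left : ∀ X : C,
    (λ_ (conj.obj X)).inv ≫ (j.hom ⊗ₘ 𝟙 (conj.obj X)) ≫ (ν (𝟙_ C) X).hom
      = conj.map (ρ_ X).inv
  nu_j_right : ∀ X : C,
    (ρ_ (conj.obj X)).inv ≫ (𝟙 (conj.obj X) ⊗ₘ j.hom) ≫ (ν X (𝟙_ C)).hom
      = conj.map (λ_ X).inv
  phi_one : (φ (𝟙_ C)).hom = j.hom ≫ conj.map j.hom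
  phi_tensor : ∀ X Y : C,
    (φ (X ⊗ Y)).hom
      = ((φ X).hom ⊗ₘ (φ Y).hom) ≫ (ν (conj.obj X) (conj.obj Y)).hom ≫ conj.map (ν Y X).hom
  phi_conj : ∀ X : C, (φ (conj.obj X)).hom = conj.map (φ X).hom

/-- In a bi-involutive tensor category, the unitary `j : 1 → \overline{1}` is determined
by the remaining data via
`j = λ_{\overline 1} ∘ (φ_1⁻¹ ⊗ id) ∘ ν_{\overline 1, 1}⁻¹ ∘ \overline{λ_{\overline 1}}⁻¹ ∘ φ_1`. -/
theorem stmt6 {C : Type*} [Category C] [MonoidalCategory C] (B : BiInvolutive C) :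
    B.j.hom
      = (B.φ (𝟙_ C)).hom
        ≫ B.conj.map (λ_ (B.conj.obj (𝟙_ C))).inv
        ≫ (B.ν (B.conj.obj (𝟙_ C)) (𝟙_ C)).inv
        ≫ ((B.φ (𝟙_ C)).inv ⊗ₘ 𝟙 (B.conj.obj (𝟙_ C)))
        ≫ (λ_ (B.conj.obj (𝟙_ C))).hom := by
  rw [← B.nu_j_right (B.conj.obj (𝟙_ C))]
  simp [MonoidalCategory.tensorHom_def, unitors_equal, whisker_exchange_assoc]
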